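/- Let x ∈ B'_l correspond to u_l = (l, 0, …, 0) ∈ B_l (so x = (l, 0, …, 0) ∈ B'_l) and let y ∈ B'_m be arbitrary. If l ≥ m, then the quantity V_0(x,y) defined as the maximum of the family {θ_{0,j}, θ'_{0,j} : 1 ≤ j ≤ n−2} ∪ {η_{0,j}, η'_{0,j} : 1 ≤ j ≤ n} equals η'_{0,1}(x,y) = l + y_1 − ȳ_1; consequently v_0(u_l ⊗ ζ) = m − y_1 + ȳ_1 for ζ ∈ B_m corresponding to y, whenever x_1 = l ≥ m − y_1 + ȳ_1. -/

import Mathlib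

open Finset

/-- Membership in the set `B'_m`. -/
def memB' (n m : ℕ) (y yb : ℕ → ℤ) : Prop :=
  (∀ i, 1 ≤ i → i ≤ n - 1 → 0 ≤ y i ∧ 0 ≤ yb i) ∧
  (-(min (y (n - 1)) (yb (n - 1))) ≤ y n) ∧
  (∑ i ∈ Finset.Icc 1 (n - 1), (y i + yb i)) + y n = (m : ℤ)

/-- `θ_{0,j}(x,y) = m + Σ_{k=1}^j (x̄_k − ȳ_k)`. -/
def th0 (m : ℤ) (xb yb : ℕ → ℤ) (j : ℕ) : ℤ :=
  m + ∑ k ∈ Finset.Icc 1 j, (xb k - yb k)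

/-- `θ'_{0,j}(x,y) = l + Σ_{k=1}^j (y_k − x_k)`. -/
def th0' (l : ℤ) (x y : ℕ → ℤ) (j : ℕ) : ℤ :=
  l + ∑ k ∈ Finset.Icc 1 j, (y k - x k)

/-- `η_{0,j}` for `1 ≤ j ≤ n−1` and `η_{0,n}`. -/
def eta0 (n : ℕ) (m : ℤ) (x xb y yb : ℕ → ℤ) (j : ℕ) : ℤ :=
  if j = n then m + (∑ k ∈ Finset.Icc 1 (n - 1), (xb k - yb k)) + x n
  else m + (∑ k ∈ Finset.Icc 1 j, (xb k - yb k)) + yb j - x j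

/-- `η'_{0,j}` for `1 ≤ j ≤ n−1` and `η'_{0,n}`. -/
def eta0' (n : ℕ) (l : ℤ) (x xb y yb : ℕ → ℤ) (j : ℕ) : ℤ :=
  if j = n then l + (∑ k ∈ Finset.Icc 1 (n - 1), (y k - x k)) - x n
  else l + (∑ k ∈ Finset.Icc 1 j, (y k - x k)) + x j - yb j

/-- The family of values whose maximum is `V_0(x,y)`. -/
def fam0 (n : ℕ) (l m : ℤ) (x xb y yb : ℕ → ℤ) : Set ℤ :=
  {v | (∃ j, 1 ≤ j ∧ j ≤ n - 2 ∧ v = th0 m xb yb j) ∨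
       (∃ j, 1 ≤ j ∧ j ≤ n - 2 ∧ v = th0' l x y j) ∨
       (∃ j, 1 ≤ j ∧ j ≤ n ∧ v = eta0 n m x xb y yb j) ∨
       (∃ j, 1 ≤ j ∧ j ≤ n ∧ v = eta0' n l x xb y yb j)}

/-- The element `u_l = (l, 0, …, 0)` of `B'_l`: unbarred coordinates. -/
def uv (l : ℕ) : ℕ → ℤ := fun i => if i = 1 then (l : ℤ) else 0

/-- Zero function (barred coordinates of `u_l`). -/
def zf : ℕ → ℤ := fun _ => 0

lemma sum_uv (l : ℕ) {j : ℕ} (hj : 1 ≤ j) :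
    ∑ k ∈ Icc 1 j, uv l k = (l : ℤ) := by
  unfold uv
  rw [Finset.sum_ite_eq' (Icc 1 j) 1 (fun _ => (l : ℤ))]
  simp [hj]

lemma hA (n m : ℕ) (y yb : ℕ → ℤ) (hn : 3 ≤ n) (hy : memB' n m y yb) :
    (∑ k ∈ Icc 1 (n - 1), y k) + yb 1 ≤ (m : ℤ) := by
  obtain ⟨pos, hmin, hsum⟩ := hy
  have hyn : -(yb (n - 1)) ≤ y n :=
    le_trans (neg_le_neg (min_le_right _ _)) hmin
  have hsplit : ∑ i ∈ Icc 1 (n - 1), (y i + yb i)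
      = (∑ i ∈ Icc 1 (n - 1), y i) + ∑ i ∈ Icc 1 (n - 1), yb i :=
    Finset.sum_add_distrib
  have hpair : yb 1 + yb (n - 1) ≤ ∑ i ∈ Icc 1 (n - 1), yb i := by
    have h1n : (1 : ℕ) ≠ n - 1 := by omega
    rw [← Finset.sum_pair h1n (f := yb)]
    apply Finset.sum_le_sum_of_subset_of_nonneg
    · intro a ha
      simp only [Finset.mem_insert, Finset.mem_singleton] at ha
      simp only [Finset.mem_Icc]
      omega
    · intro i hi _
      exact (pos i (Finset.mem_Icc.mp hi).1 (Finset.mem_Icc.mp hi).2).2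
  linarith

lemma key (n l m : ℕ) (hn : 3 ≤ n) (y yb : ℕ → ℤ) (hy : memB' n m y yb)
    (H1 : (m : ℤ) ≤ (l : ℤ) + y 1) (H2 : (m : ℤ) + yb 1 ≤ 2 * (l : ℤ) + y 1) :
    IsGreatest (fam0 n (l : ℤ) (m : ℤ) (uv l) zf y yb) ((l : ℤ) + y 1 - yb 1) := by
  have pos := hy.1
  have hAy := hA n m y yb hn hy
  have hyb1 : 0 ≤ yb 1 := (pos 1 le_rfl (by omega)).2
  have hy1 : 0 ≤ y 1 := (pos 1 le_rfl (by omega)).1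
  have hSy : ∀ j : ℕ, j ≤ n - 1 →
      ∑ k ∈ Icc 1 j, y k ≤ ∑ k ∈ Icc 1 (n - 1), y k := by
    intro j hj
    apply Finset.sum_le_sum_of_subset_of_nonneg
    · intro a ha; simp only [Finset.mem_Icc] at ha ⊢; omega
    · intro i hi _
      exact (pos i (Finset.mem_Icc.mp hi).1 (Finset.mem_Icc.mp hi).2).1
  have hSyb : ∀ j : ℕ, 1 ≤ j → j ≤ n - 1 → yb 1 ≤ ∑ k ∈ Icc 1 j, yb k := by
    intro j h1 h2
    apply Finset.single_le_sum (f := yb)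
    · intro i hi
      have := Finset.mem_Icc.mp hi
      exact (pos i this.1 (by omega)).2
    · simp [h1]
  have hSyb2 : ∀ j : ℕ, 2 ≤ j → j ≤ n - 1 →
      yb 1 + yb j ≤ ∑ k ∈ Icc 1 j, yb k := by
    intro j h2 hj
    have h1j : (1 : ℕ) ≠ j := by omega
    rw [← Finset.sum_pair h1j (f := yb)]
    apply Finset.sum_le_sum_of_subset_of_nonneg
    · intro a ha
      simp only [Finset.mem_insert, Finset.mem_singleton] at ha
      simp only [Finset.mem_Icc]; omega
    · intro i hi _
      have := Finset.mem_Icc.mp hi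
      exact (pos i this.1 (by omega)).2
  constructor
  · right; right; right
    refine ⟨1, le_rfl, by omega, ?_⟩
    unfold eta0'
    rw [if_neg (by omega : (1 : ℕ) ≠ n)]
    simp [uv, Finset.Icc_self]
    ring
  · rintro v (⟨j, hj1, hj2, rfl⟩ | ⟨j, hj1, hj2, rfl⟩ | ⟨j, hj1, hj2, rfl⟩ |
      ⟨j, hj1, hj2, rfl⟩)
    · unfold th0
      simp only [zf, zero_sub, Finset.sum_neg_distrib]
      have := hSyb j hj1 (by omega)
      linarith
    · unfold th0'
      rw [Finset.sum_sub_distrib, sum_uv l hj1]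
      have := hSy j (by omega)
      linarith
    · unfold eta0
      by_cases hjn : j = n
      · rw [if_pos hjn]
        simp only [zf, zero_sub, Finset.sum_neg_distrib]
        have huvn : uv l n = 0 := by unfold uv; rw [if_neg (by omega)]
        have := hSyb (n - 1) (by omega) le_rfl
        rw [huvn]
        linarith
      · rw [if_neg hjn]
        simp only [zf, zero_sub, Finset.sum_neg_distrib]
        rcases eq_or_lt_of_le hj1 with h1 | h1
        · subst h1
          simp only [Finset.Icc_self, Finset.sum_singleton]
          have : uv l 1 = (l : ℤ) := by unfold uv; simp
          rw [this]
          linarith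
        · have huvj : uv l j = 0 := by unfold uv; rw [if_neg (by omega)]
          have := hSyb2 j h1 (by omega)
          rw [huvj]
          linarith
    · unfold eta0'
      by_cases hjn : j = n
      · rw [if_pos hjn]
        rw [Finset.sum_sub_distrib, sum_uv l (by omega)]
        have huvn : uv l n = 0 := by unfold uv; rw [if_neg (by omega)]
        rw [huvn]
        linarith
      · rw [if_neg hjn]
        rw [Finset.sum_sub_distrib, sum_uv l hj1]
        rcases eq_or_lt_of_le hj1 with h1 | h1
        · subst h1
          simp only [Finset.Icc_self, Finset.sum_singleton]
          have : uv l 1 = (l : ℤ) := by unfold uv; simp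
          rw [this]
          linarith
        · have huvj : uv l j = 0 := by unfold uv; rw [if_neg (by omega)]
          have hle := hSy j (by omega)
          have hybj : 0 ≤ yb j := (pos j (by omega) (by omega)).2
          rw [huvj]
          linarith

/-- For `x = u_l` and `y ∈ B'_m` with `l ≥ m`, the maximum `V_0(x,y)` of the
family equals `η'_{0,1}(x,y) = l + y_1 − ȳ_1`; consequently
`v_0(u_l ⊗ ζ) = l + m − V_0 = m − y_1 + ȳ_1` whenever `l ≥ m − y_1 + ȳ_1`. -/
theorem stmt16 (n l m : ℕ) (hn : 3 ≤ n) (y yb : ℕ → ℤ)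
    (hy : memB' n m y yb) :
    ((m : ℤ) ≤ (l : ℤ) →
      IsGreatest (fam0 n (l : ℤ) (m : ℤ) (uv l) zf y yb) ((l : ℤ) + y 1 - yb 1)) ∧
    (∀ V0 : ℤ, IsGreatest (fam0 n (l : ℤ) (m : ℤ) (uv l) zf y yb) V0 →
      (m : ℤ) - y 1 + yb 1 ≤ (l : ℤ) →
      (l : ℤ) + (m : ℤ) - V0 = (m : ℤ) - y 1 + yb 1) := by
  have hy1 : 0 ≤ y 1 := (hy.1 1 le_rfl (by omega)).1
  have hyb1 : 0 ≤ yb 1 := (hy.1 1 le_rfl (by omega)).2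
  have hl0 : (0 : ℤ) ≤ (l : ℤ) := Int.natCast_nonneg l
  have hAy := hA n m y yb hn hy
  have hSy0 : 0 ≤ ∑ k ∈ Icc 1 (n - 1), y k := by
    apply Finset.sum_nonneg
    intro i hi
    exact (hy.1 i (Finset.mem_Icc.mp hi).1 (Finset.mem_Icc.mp hi).2).1
  constructor
  · intro hml
    exact key n l m hn y yb hy (by linarith) (by linarith)
  · intro V0 hV0 hle
    have hg : IsGreatest (fam0 n (l : ℤ) (m : ℤ) (uv l) zf y yb)
        ((l : ℤ) + y 1 - yb 1) :=
      key n l m hn y yb hy (by linarith) (by linarith)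
    have := hV0.unique hg
    linarith
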